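/- Let $\{N_\alpha : A \to A\}_{\alpha \in \Omega}$ be a Nijenhuis family on an associative algebra $A$. Then the linear map $N : A \otimes k\Omega \to A \otimes k\Omega$ defined by $N(a \otimes \alpha) = N_\alpha(a) \otimes \alpha$ is a Nijenhuis operator on the tensor product algebra $A \otimes k\Omega$, i.e. $N(x) \bullet N(y) = N(N(x)\bullet y + x \bullet N(y) - N(x \bullet y))$ for all $x,y \in A \otimes k\Omega$. -/

import Mathlib

/-- A Nijenhuis family `{N_α}` on `A` induces a Nijenhuis operator on the
tensor product algebra `A ⊗ kΩ`, modelled as `Ω →₀ A` (with `single α a ↔ a ⊗ α`),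
via `N (a ⊗ α) = N_α(a) ⊗ α`. -/
theorem Nijenhuis_family_induces_Nijenhuis_operator_on_tensor
    {k Ω A : Type*} [Field k] [Semigroup Ω]
    [NonUnitalRing A] [Module k A] [SMulCommClass k A A] [IsScalarTower k A A]
    (Nf : Ω → A →ₗ[k] A)
    (hNf : ∀ (α β : Ω) (a b : A),
      Nf α a * Nf β b
        = Nf (α * β) (Nf α a * b + a * Nf β b - Nf (α * β) (a * b)))
    (bul : (Ω →₀ A) →ₗ[k] (Ω →₀ A) →ₗ[k] (Ω →₀ A))
    (hbul : ∀ (α β : Ω) (a b : A),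
      bul (Finsupp.single α a) (Finsupp.single β b) = Finsupp.single (α * β) (a * b))
    (N : (Ω →₀ A) →ₗ[k] (Ω →₀ A))
    (hN : ∀ (α : Ω) (a : A), N (Finsupp.single α a) = Finsupp.single α (Nf α a)) :
    ∀ x y : Ω →₀ A,
      bul (N x) (N y) = N (bul (N x) y + bul x (N y) - N (bul x y)) := by
  intro x y
  induction x using Finsupp.induction_linear with
  | zero => simp
  | add x₁ x₂ h1 h2 =>
      simp only [map_add, LinearMap.add_apply, h1, h2]
      rw [← map_add]
      congr 1
      abel
  | single α a =>
      induction y using Finsupp.induction_linear with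
      | zero => simp
      | add y₁ y₂ h1 h2 =>
          simp only [map_add, h1, h2]
          rw [← map_add]
          congr 1
          abel
      | single β b =>
          rw [hN, hN, hbul, hbul, hbul, hbul, hN, ← Finsupp.single_add,
            ← Finsupp.single_sub, hN, hNf]
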